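/- For all real numbers r, q with 1 ≤ r < q and all real x with 0 ≤ x ≤ 1 − (r/q)^{1/(q−1)}, one has (1−x)^q ≤ 1 − r·x. -/

import Mathlib

/-- For `1 ≤ r < q` and `0 ≤ x ≤ 1 − (r/q)^{1/(q−1)}`, one has `(1−x)^q ≤ 1 − r·x`. -/
theorem one_sub_rpow_le (r q x : ℝ) (hr : 1 ≤ r) (hrq : r < q)
    (hx0 : 0 ≤ x) (hx : x ≤ 1 - (r / q) ^ (1 / (q - 1))) :
    (1 - x) ^ q ≤ 1 - r * x := by
  set t : ℝ := (r / q) ^ (1 / (q - 1)) with ht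
  have hq1 : 1 < q := lt_of_le_of_lt hr hrq
  have hq0 : 0 < q := by linarith
  have hrq01 : 0 < r / q := div_pos (by linarith) hq0
  have ht0 : 0 < t := Real.rpow_pos_of_pos hrq01 _
  have htpow : t ^ (q - 1) = r / q := by
    rw [ht, ← Real.rpow_mul hrq01.le, one_div,
      inv_mul_cancel₀ (by linarith : q - 1 ≠ 0), Real.rpow_one]
  have hd : ∀ y : ℝ, HasDerivAt (fun x => 1 - r * x - (1 - x) ^ q)
      (-r + q * (1 - y) ^ (q - 1)) y := by
    intro y
    have h1 : HasDerivAt (fun x : ℝ => 1 - x) (-1) y := by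
      simpa using (hasDerivAt_id y).const_sub 1
    have h2 := (Real.hasDerivAt_rpow_const (p := q) (x := 1 - y)
      (Or.inr hq1.le)).comp y h1
    have h3 : HasDerivAt (fun x : ℝ => 1 - r * x) (-r) y := by
      simpa using ((hasDerivAt_id y).const_mul r).const_sub 1
    have := h3.sub h2
    exact this.congr_deriv (by ring)
  have key : MonotoneOn (fun x => 1 - r * x - (1 - x) ^ q) (Set.Icc 0 (1 - t)) := by
    apply monotoneOn_of_deriv_nonneg (convex_Icc _ _)
    · exact ContinuousOn.congr (fun y _ => (hd y).continuousAt.continuousWithinAt)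
        (fun y _ => rfl) |>.mono (by intro y hy; exact hy)
    · exact fun y _ => (hd y).differentiableAt.differentiableWithinAt
    · intro y hy
      rw [interior_Icc] at hy
      rw [(hd y).deriv]
      have h1y : t ≤ 1 - y := by linarith [hy.2]
      have : (r / q) ≤ (1 - y) ^ (q - 1) := by
        rw [← htpow]
        exact Real.rpow_le_rpow ht0.le h1y (by linarith)
      have := mul_le_mul_of_nonneg_left this hq0.le
      rw [mul_div_cancel₀ _ hq0.ne'] at this
      linarith
  have h0mem : (0 : ℝ) ∈ Set.Icc (0 : ℝ) (1 - t) := ⟨le_refl 0, by linarith⟩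
  have hxmem : x ∈ Set.Icc (0 : ℝ) (1 - t) := ⟨hx0, hx⟩
  have := key h0mem hxmem hx0
  simp [Real.one_rpow] at this
  linarith
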